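/- The Blackwell relation ≿_B and Veinott's average overtaking relation ≿_V coincide on 𝒰₊: for all u, v ∈ 𝒰₊, liminf_{β→1⁻} ∑_{t=1}^∞ β^t (u_t − v_t) ≥ 0 if and only if liminf_{n→∞} (1/n)∑_{T=1}^n ∑_{t=1}^T (u_t − v_t) ≥ 0. -/

import Mathlib

open Filter Finset Topology

/-- A bounded real sequence (an element of 𝒰). Index `t : ℕ` represents time `t+1`. -/
def Bdd (u : ℕ → ℝ) : Prop := ∃ C : ℝ, ∀ t, |u t| ≤ C

/-- Partial sum `∑_{t=1}^n u_t`. -/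
noncomputable def psum (u : ℕ → ℝ) (n : ℕ) : ℝ := ∑ t ∈ Finset.range n, u t

/-- Cesàro average `(1/n) ∑_{T=1}^n ∑_{t=1}^T u_t`. -/
noncomputable def cesaroAvg (u : ℕ → ℝ) (n : ℕ) : ℝ :=
  (∑ T ∈ Finset.range n, psum u (T + 1)) / n

/-- The series `∑ u_t` is Cesàro-summable. -/
def CesaroSummable (u : ℕ → ℝ) : Prop :=
  ∃ L : ℝ, Filter.Tendsto (cesaroAvg u) Filter.atTop (nhds L)

/-- The series `∑ u_t` has bounded partial sums. -/
def BddPartialSums (u : ℕ → ℝ) : Prop := ∃ C : ℝ, ∀ n, |psum u n| ≤ C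

/-- The long-run average of `u` exists and equals `a`. -/
def AvgTo (u : ℕ → ℝ) (a : ℝ) : Prop :=
  Filter.Tendsto (fun n : ℕ => psum u n / n) Filter.atTop (nhds a)

/-- The sequence `(c, u_1, u_2, …)`. -/
def cons (c : ℝ) (u : ℕ → ℝ) : ℕ → ℝ := fun t => if t = 0 then c else u (t - 1)

/-- The discounted sum `∑_{t=1}^∞ β^t d_t`. -/
noncomputable def discSum (d : ℕ → ℝ) (β : ℝ) : ℝ := ∑' t : ℕ, β ^ (t + 1) * d t

/-- The Blackwell relation `u ≿_B v`. -/
def BlackwellGE (u v : ℕ → ℝ) : Prop :=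
  0 ≤ Filter.liminf (fun β => discSum (u - v) β) (nhdsWithin 1 (Set.Iio 1))

/-- Veinott's average overtaking relation `u ≿_V v`. -/
def VeinottGE (u v : ℕ → ℝ) : Prop :=
  0 ≤ Filter.liminf (cesaroAvg (u - v)) Filter.atTop

/-- Reflexivity of the preference relation on 𝒰. -/
def ReflOn (R : (ℕ → ℝ) → (ℕ → ℝ) → Prop) : Prop := ∀ u, Bdd u → R u u

/-- Transitivity of the preference relation on 𝒰. -/
def TransOn (R : (ℕ → ℝ) → (ℕ → ℝ) → Prop) : Prop :=
  ∀ u v w, Bdd u → Bdd v → Bdd w → R u v → R v w → R u w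

/-- Strict preference `u ≻ v`. -/
def StrictPref (R : (ℕ → ℝ) → (ℕ → ℝ) → Prop) (u v : ℕ → ℝ) : Prop := R u v ∧ ¬ R v u

/-- Axiom A1: `u > v` implies `u ≻ v`. -/
def AxiomA1 (R : (ℕ → ℝ) → (ℕ → ℝ) → Prop) : Prop :=
  ∀ u v, Bdd u → Bdd v → (∀ t, v t ≤ u t) → (∃ t, v t < u t) → StrictPref R u v

/-- Axiom A2: `u ≿ v` implies `u + α ≿ v + α`. -/
def AxiomA2 (R : (ℕ → ℝ) → (ℕ → ℝ) → Prop) : Prop :=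
  ∀ u v α, Bdd u → Bdd v → Bdd α → R u v → R (u + α) (v + α)

/-- Axiom A3: if the long-run average `ū` exists then `(ū, u) ∼ u`. -/
def AxiomA3 (R : (ℕ → ℝ) → (ℕ → ℝ) → Prop) : Prop :=
  ∀ u a, Bdd u → AvgTo u a → (R (cons a u) u ∧ R u (cons a u))

/-- `w` is eventually periodic with period `p` from time `T` onward. -/
def EvPeriodicFrom (w : ℕ → ℝ) (p T : ℕ) : Prop := 1 ≤ p ∧ ∀ t, T ≤ t → w (t + p) = w t

/-- `w` is eventually periodic. -/
def EvPeriodic (w : ℕ → ℝ) : Prop := ∃ p T : ℕ, EvPeriodicFrom w p T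

/-- The set 𝒰₊: bounded streams of the form `w + Δ`, `w` eventually periodic and
`∑ Δ_t` Cesàro-summable with bounded partial sums. -/
def UPlus (u : ℕ → ℝ) : Prop :=
  Bdd u ∧ ∃ w Δ : ℕ → ℝ, u = w + Δ ∧ EvPeriodic w ∧ CesaroSummable Δ ∧ BddPartialSums Δ

/-- An `S × S` row-stochastic matrix. -/
def RowStochastic {S : ℕ} (Q : Matrix (Fin S) (Fin S) ℝ) : Prop :=
  (∀ i j, 0 ≤ Q i j) ∧ ∀ i, ∑ j, Q i j = 1

/-- 𝒰_stat: streams generated by stationary policies of finite MDPs,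
`u_t = (Q^{t-1} · R)_s` (here `u t` is `u_{t+1}`, so `u t = (Q^t · R)_s`). -/
def UStat (u : ℕ → ℝ) : Prop :=
  ∃ (S : ℕ) (_ : 0 < S) (Q : Matrix (Fin S) (Fin S) ℝ) (R : Fin S → ℝ) (s : Fin S),
    RowStochastic Q ∧ ∀ t : ℕ, u t = ((Q ^ t).mulVec R) s

namespace Stmt11Aux

open Filter Finset Topology Set

lemma psum_zero (g : ℕ → ℝ) : psum g 0 = 0 := by simp [psum]

lemma psum_succ (g : ℕ → ℝ) (n : ℕ) : psum g (n + 1) = psum g n + g n :=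
  Finset.sum_range_succ g n

lemma psum_congr {x y : ℕ → ℝ} (h : ∀ t, x t = y t) (n : ℕ) : psum x n = psum y n :=
  Finset.sum_congr rfl fun t _ => h t

lemma psum_add (x y : ℕ → ℝ) (n : ℕ) :
    psum (fun t => x t + y t) n = psum x n + psum y n := Finset.sum_add_distrib

lemma psum_sub (x y : ℕ → ℝ) (n : ℕ) :
    psum (fun t => x t - y t) n = psum x n - psum y n := Finset.sum_sub_distrib _ _

lemma psum_neg (x : ℕ → ℝ) (n : ℕ) : psum (fun t => -x t) n = -psum x n := by
  simp [psum]

lemma psum_const (a : ℝ) (n : ℕ) : psum (fun _ => a) n = n * a := by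
  simp [psum, mul_comm]

lemma psum_sub_const (x : ℕ → ℝ) (a : ℝ) (n : ℕ) :
    psum (fun t => x t - a) n = psum x n - n * a := by
  rw [psum_sub, psum_const]

lemma psum_add_block (g : ℕ → ℝ) (n p : ℕ) :
    psum g (n + p) = psum g n + ∑ i ∈ Finset.range p, g (n + i) := by
  induction p with
  | zero => simp [psum]
  | succ p ih =>
    show psum g ((n + p) + 1) = _
    rw [psum_succ, ih, Finset.sum_range_succ]
    ring

lemma cesaroAvg_congr {x y : ℕ → ℝ} (h : ∀ t, x t = y t) (n : ℕ) :
    cesaroAvg x n = cesaroAvg y n := by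
  unfold cesaroAvg
  rw [Finset.sum_congr rfl fun T _ => psum_congr h (T + 1)]

lemma cesaroAvg_add (x y : ℕ → ℝ) (n : ℕ) :
    cesaroAvg (fun t => x t + y t) n = cesaroAvg x n + cesaroAvg y n := by
  unfold cesaroAvg
  rw [← add_div, ← Finset.sum_add_distrib]
  congr 1
  exact Finset.sum_congr rfl fun T _ => psum_add x y (T + 1)

lemma cesaroAvg_sub (x y : ℕ → ℝ) (n : ℕ) :
    cesaroAvg (fun t => x t - y t) n = cesaroAvg x n - cesaroAvg y n := by
  unfold cesaroAvg
  rw [← sub_div, ← Finset.sum_sub_distrib]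
  congr 1
  exact Finset.sum_congr rfl fun T _ => psum_sub x y (T + 1)

lemma cesaroAvg_neg (x : ℕ → ℝ) (n : ℕ) :
    cesaroAvg (fun t => -x t) n = -cesaroAvg x n := by
  unfold cesaroAvg
  rw [← neg_div, ← Finset.sum_neg_distrib]
  congr 1
  exact Finset.sum_congr rfl fun T _ => psum_neg x (T + 1)

lemma sum_range_cast (n : ℕ) : ∑ T ∈ Finset.range n, ((T : ℝ) + 1) = n * (n + 1) / 2 := by
  induction n with
  | zero => simp
  | succ n ih =>
    rw [Finset.sum_range_succ, ih]
    push_cast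
    ring

lemma cesaroAvg_const (a : ℝ) (n : ℕ) (hn : 1 ≤ n) :
    cesaroAvg (fun _ => a) n = a * (n + 1) / 2 := by
  have hn0 : (n : ℝ) ≠ 0 := Nat.cast_ne_zero.mpr (by omega)
  unfold cesaroAvg
  rw [Finset.sum_congr rfl fun T _ => psum_const a (T + 1)]
  have : ∑ T ∈ Finset.range n, ((T + 1 : ℕ) : ℝ) * a
      = (∑ T ∈ Finset.range n, ((T : ℝ) + 1)) * a := by
    rw [Finset.sum_mul]
    exact Finset.sum_congr rfl fun T _ => by push_cast; ring
  rw [this, sum_range_cast]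
  field_simp

/-- eventually periodic sequences are bounded -/
lemma bdd_of_ev_periodic {h : ℕ → ℝ} {p T : ℕ} (hp : 1 ≤ p)
    (hper : ∀ n, T ≤ n → h (n + p) = h n) : ∃ C, ∀ n, |h n| ≤ C := by
  refine ⟨∑ k ∈ Finset.range (T + p), |h k|, fun n => ?_⟩
  induction n using Nat.strong_induction_on with
  | _ n ih =>
    by_cases hn : n < T + p
    · exact Finset.single_le_sum (fun k _ => abs_nonneg (h k)) (Finset.mem_range.mpr hn)
    · push_neg at hn
      have h2 : T ≤ n - p := by omega
      have h3 := hper (n - p) h2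
      rw [show n - p + p = n by omega] at h3
      rw [h3]
      exact ih (n - p) (by omega)

lemma window_const {g : ℕ → ℝ} {p T : ℕ} (hg : ∀ t, T ≤ t → g (t + p) = g t) :
    ∀ n, T ≤ n → ∑ i ∈ Finset.range p, g (n + i) = ∑ i ∈ Finset.range p, g (T + i) := by
  intro n hn
  induction n, hn using Nat.le_induction with
  | base => rfl
  | succ n hn ih =>
    have h1 : ∑ i ∈ Finset.range (p + 1), g (n + i)
        = ∑ i ∈ Finset.range p, g (n + i) + g (n + p) := Finset.sum_range_succ _ _
    have h2 : ∑ i ∈ Finset.range (p + 1), g (n + i)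
        = ∑ i ∈ Finset.range p, g (n + (i + 1)) + g (n + 0) := Finset.sum_range_succ' _ _
    have h3 : ∑ i ∈ Finset.range p, g (n + (i + 1)) = ∑ i ∈ Finset.range p, g (n + 1 + i) :=
      Finset.sum_congr rfl fun i _ => by rw [show n + (i + 1) = n + 1 + i by omega]
    have h4 := hg n hn
    rw [h3] at h2
    rw [← ih]
    have : g (n + 0) = g n := by rw [Nat.add_zero]
    linarith [h1, h2]

lemma psum_dev_bdd {w : ℕ → ℝ} {p T : ℕ} (hw : EvPeriodicFrom w p T) :
    ∃ C, ∀ n, |psum w n - n * ((∑ i ∈ Finset.range p, w (T + i)) / p)| ≤ C := by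
  obtain ⟨hp, hper⟩ := hw
  set a := (∑ i ∈ Finset.range p, w (T + i)) / p with ha
  have hp0 : (p : ℝ) ≠ 0 := Nat.cast_ne_zero.mpr (by omega)
  have hpa : (p : ℝ) * a = ∑ i ∈ Finset.range p, w (T + i) := by
    rw [ha]; field_simp
  have key : ∀ n, T ≤ n →
      psum w (n + p) - ((n + p : ℕ) : ℝ) * a = psum w n - n * a := by
    intro n hn
    rw [psum_add_block, window_const hper n hn, ← hpa]
    push_cast
    ring
  exact bdd_of_ev_periodic hp key

lemma avg_of_dev_bdd {q : ℕ → ℝ} {m C : ℝ} (h : ∀ n, |psum q n - n * m| ≤ C) :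
    Tendsto (fun n : ℕ => psum q n / n) atTop (𝓝 m) := by
  rw [← tendsto_sub_nhds_zero_iff]
  refine squeeze_zero_norm' ?_ (tendsto_const_div_atTop_nhds_zero_nat C)
  filter_upwards [eventually_ge_atTop 1] with n hn
  have hn0 : (0 : ℝ) < n := by exact_mod_cast hn
  have heq : psum q n / n - m = (psum q n - n * m) / n := by field_simp
  rw [Real.norm_eq_abs, heq, abs_div, abs_of_pos hn0]
  gcongr
  exact h n

end Stmt11Aux


namespace Stmt11Aux

open Filter Finset Topology Set

lemma summable_geom_succ {β : ℝ} (hβ0 : 0 < β) (hβ1 : β < 1) :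
    Summable (fun t : ℕ => β ^ (t + 1)) := by
  refine ((summable_geometric_of_lt_one hβ0.le hβ1).mul_left β).congr fun t => ?_
  rw [pow_succ, mul_comm]

lemma tsum_geom_succ {β : ℝ} (hβ0 : 0 < β) (hβ1 : β < 1) :
    ∑' t : ℕ, β ^ (t + 1) = β * (1 - β)⁻¹ := by
  calc ∑' t : ℕ, β ^ (t + 1) = ∑' t : ℕ, β * β ^ t :=
        tsum_congr fun t => by rw [pow_succ, mul_comm]
    _ = β * ∑' t : ℕ, β ^ t := tsum_mul_left
    _ = β * (1 - β)⁻¹ := by rw [tsum_geometric_of_lt_one hβ0.le hβ1]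

lemma summable_lin_succ {β : ℝ} (hβ0 : 0 < β) (hβ1 : β < 1) :
    Summable (fun t : ℕ => ((t : ℝ) + 1) * β ^ (t + 1)) := by
  have hβ : ‖β‖ < 1 := by rw [Real.norm_eq_abs, abs_of_pos hβ0]; exact hβ1
  have h := summable_pow_mul_geometric_of_norm_lt_one (R := ℝ) 1 hβ
  have h2 := (summable_nat_add_iff (f := fun n : ℕ => ((n : ℝ)) ^ 1 * β ^ n) 1).mpr h
  refine h2.congr fun t => ?_
  push_cast
  ring

lemma tsum_lin_succ {β : ℝ} (hβ0 : 0 < β) (hβ1 : β < 1) :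
    ∑' t : ℕ, ((t : ℝ) + 1) * β ^ (t + 1) = β / (1 - β) ^ 2 := by
  have hβ : ‖β‖ < 1 := by rw [Real.norm_eq_abs, abs_of_pos hβ0]; exact hβ1
  have h0 : ∑' n : ℕ, (n : ℝ) * β ^ n = β / (1 - β) ^ 2 :=
    tsum_coe_mul_geometric_of_norm_lt_one hβ
  have hsum : Summable (fun n : ℕ => (n : ℝ) * β ^ n) := by
    refine (summable_pow_mul_geometric_of_norm_lt_one (R := ℝ) 1 hβ).congr fun n => by
      simp
  rw [hsum.tsum_eq_zero_add] at h0
  simp only [Nat.cast_zero, zero_mul, pow_zero, zero_add] at h0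
  rw [← h0]
  exact tsum_congr fun t => by push_cast; ring

lemma abel_step {A : ℕ → ℝ} (hA0 : A 0 = 0) {β : ℝ}
    (hs : Summable (fun t : ℕ => β ^ (t + 1) * A (t + 1))) :
    ∑' t : ℕ, β ^ (t + 1) * (A (t + 1) - A t)
      = (1 - β) * ∑' t : ℕ, β ^ (t + 1) * A (t + 1) := by
  have hs2 : Summable (fun t : ℕ => β ^ (t + 1) * A t) := by
    have h1 : Summable (fun t : ℕ => β ^ (t + 1 + 1) * A (t + 1)) :=
      (hs.mul_left β).congr fun t => by ring
    exact (summable_nat_add_iff (f := fun t : ℕ => β ^ (t + 1) * A t) 1).mp h1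
  have hzero : ∑' t : ℕ, β ^ (t + 1) * A t = β * ∑' t : ℕ, β ^ (t + 1) * A (t + 1) := by
    rw [hs2.tsum_eq_zero_add, hA0, mul_zero, zero_add, ← tsum_mul_left]
    exact tsum_congr fun t => by ring
  calc ∑' t : ℕ, β ^ (t + 1) * (A (t + 1) - A t)
      = ∑' t : ℕ, (β ^ (t + 1) * A (t + 1) - β ^ (t + 1) * A t) :=
        tsum_congr fun t => by ring
    _ = (∑' t : ℕ, β ^ (t + 1) * A (t + 1)) - ∑' t : ℕ, β ^ (t + 1) * A t :=
        hs.tsum_sub hs2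
    _ = _ := by rw [hzero]; ring

end Stmt11Aux


namespace Stmt11Aux

open Filter Finset Topology Set

set_option maxHeartbeats 1000000 in
lemma frobenius {e : ℕ → ℝ} {C c : ℝ} (hE : ∀ n, |psum e n| ≤ C)
    (hc : Tendsto (cesaroAvg e) atTop (𝓝 c)) :
    Tendsto (fun β => discSum e β) (𝓝[<] (1 : ℝ)) (𝓝 c) := by
  have hC0 : 0 ≤ C := le_trans (abs_nonneg _) (hE 0)
  set F : ℕ → ℝ := fun n => ∑ k ∈ Finset.range n, psum e (k + 1) with hF
  set G : ℕ → ℝ := fun n => F n - c * n with hG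
  have hFb : ∀ n, |F n| ≤ C * n := by
    intro n
    calc |F n| ≤ ∑ k ∈ Finset.range n, |psum e (k + 1)| := Finset.abs_sum_le_sum_abs _ _
      _ ≤ ∑ k ∈ Finset.range n, C := Finset.sum_le_sum fun k _ => hE (k + 1)
      _ = C * n := by rw [Finset.sum_const, Finset.card_range, nsmul_eq_mul, mul_comm]
  have hS1 : ∀ β : ℝ, 0 < β → β < 1 → Summable (fun t : ℕ => β ^ (t + 1) * psum e (t + 1)) := by
    intro β h0 h1
    refine Summable.of_norm_bounded ((summable_geom_succ h0 h1).mul_left C) fun t => ?_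
    rw [Real.norm_eq_abs, abs_mul, abs_of_pos (pow_pos h0 _)]
    calc β ^ (t + 1) * |psum e (t + 1)| ≤ β ^ (t + 1) * C :=
          mul_le_mul_of_nonneg_left (hE _) (pow_pos h0 _).le
      _ = C * β ^ (t + 1) := mul_comm _ _
  have hS2 : ∀ β : ℝ, 0 < β → β < 1 → Summable (fun t : ℕ => β ^ (t + 1) * F (t + 1)) := by
    intro β h0 h1
    refine Summable.of_norm_bounded ((summable_lin_succ h0 h1).mul_left C) fun t => ?_
    have h1' : |F (t + 1)| ≤ C * ((t : ℝ) + 1) := by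
      have := hFb (t + 1); push_cast at this; linarith
    have h2 : (0 : ℝ) < β ^ (t + 1) := pow_pos h0 _
    rw [Real.norm_eq_abs, abs_mul, abs_of_pos h2]
    calc β ^ (t + 1) * |F (t + 1)| ≤ β ^ (t + 1) * (C * ((t : ℝ) + 1)) :=
          mul_le_mul_of_nonneg_left h1' h2.le
      _ = C * (((t : ℝ) + 1) * β ^ (t + 1)) := by ring
  have hSG : ∀ β : ℝ, 0 < β → β < 1 → Summable (fun t : ℕ => β ^ (t + 1) * G (t + 1)) := by
    intro β h0 h1
    have := (hS2 β h0 h1).sub ((summable_lin_succ h0 h1).mul_left c)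
    refine this.congr fun t => ?_
    simp only [hG]
    push_cast
    ring
  have key : ∀ β : ℝ, 0 < β → β < 1 →
      discSum e β = c * β + (1 - β) ^ 2 * ∑' t : ℕ, β ^ (t + 1) * G (t + 1) := by
    intro β h0 h1
    have hne : (1 : ℝ) - β ≠ 0 := by intro h; rw [sub_eq_zero] at h; exact h1.ne h.symm
    have s1 := hS1 β h0 h1
    have s2 := hS2 β h0 h1
    have step1 : discSum e β = (1 - β) * ∑' t : ℕ, β ^ (t + 1) * psum e (t + 1) := by
      unfold discSum
      rw [← abel_step (A := psum e) (psum_zero e) s1]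
      exact tsum_congr fun t => by rw [psum_succ]; ring
    have step2 : ∑' t : ℕ, β ^ (t + 1) * psum e (t + 1)
        = (1 - β) * ∑' t : ℕ, β ^ (t + 1) * F (t + 1) := by
      rw [← abel_step (A := F) (by simp [hF]) s2]
      refine tsum_congr fun t => ?_
      have hFt : F (t + 1) - F t = psum e (t + 1) := by
        simp only [hF, Finset.sum_range_succ]
        ring
      rw [hFt]
    have split : ∑' t : ℕ, β ^ (t + 1) * F (t + 1)
        = c * (β / (1 - β) ^ 2) + ∑' t : ℕ, β ^ (t + 1) * G (t + 1) := by
      have hpt : ∀ t : ℕ, β ^ (t + 1) * F (t + 1)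
          = c * (((t : ℝ) + 1) * β ^ (t + 1)) + β ^ (t + 1) * G (t + 1) := by
        intro t
        simp only [hG]
        push_cast
        ring
      rw [tsum_congr hpt, ((summable_lin_succ h0 h1).mul_left c).tsum_add (hSG β h0 h1),
        tsum_mul_left, tsum_lin_succ h0 h1]
    rw [step1, step2, split]
    field_simp
  -- now the ε-δ argument
  rw [Metric.tendsto_nhdsWithin_nhds]
  intro ε hε
  obtain ⟨N, hN⟩ := (Metric.tendsto_atTop.mp hc) (ε / 8) (by positivity)
  set M := max N 1 with hM
  set K := ∑ k ∈ Finset.range M, |G k| with hK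
  have hK0 : 0 ≤ K := Finset.sum_nonneg fun _ _ => abs_nonneg _
  have hGb : ∀ n : ℕ, |G n| ≤ ε / 8 * n + K := by
    intro n
    by_cases hn : n < M
    · have h1 : |G n| ≤ K :=
        Finset.single_le_sum (fun k _ => abs_nonneg (G k)) (Finset.mem_range.mpr hn)
      have h2 : (0 : ℝ) ≤ ε / 8 * n := by positivity
      linarith
    · push_neg at hn
      have hn1 : 1 ≤ n := le_trans (le_max_right N 1) hn
      have hnN : N ≤ n := le_trans (le_max_left N 1) hn
      have hd := hN n hnN
      have hn0 : (0 : ℝ) < n := by exact_mod_cast hn1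
      have hca : cesaroAvg e n = F n / n := rfl
      rw [hca, Real.dist_eq] at hd
      have habs : |G n| = |F n / n - c| * n := by
        simp only [hG]
        rw [← abs_of_pos hn0, ← abs_mul]
        congr 1
        field_simp
        rw [abs_of_pos hn0]
        ring
      rw [habs]
      have := mul_le_mul_of_nonneg_right hd.le hn0.le
      linarith
  have hden : (0 : ℝ) < |c| + K + 1 := by
    have := abs_nonneg c; linarith
  refine ⟨min (1 / 2) (ε / (8 * (|c| + K + 1))), lt_min (by norm_num) (by positivity), ?_⟩
  intro β hβmem hβdist
  have hβ1 : β < 1 := hβmem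
  rw [Real.dist_eq] at hβdist
  have habs1 : |β - 1| = 1 - β := by rw [abs_of_neg (by linarith)]; ring
  rw [habs1] at hβdist
  have hβhalf : 1 - β < 1 / 2 := lt_of_lt_of_le hβdist (min_le_left _ _)
  have hβd2 : 1 - β < ε / (8 * (|c| + K + 1)) := lt_of_lt_of_le hβdist (min_le_right _ _)
  have hβ0 : 0 < β := by linarith
  have hβpos : 0 < 1 - β := by linarith
  -- bound the residual
  have sG := hSG β hβ0 hβ1
  have hRb : |∑' t : ℕ, β ^ (t + 1) * G (t + 1)|
      ≤ ε / 8 * (β / (1 - β) ^ 2) + K * (β * (1 - β)⁻¹) := by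
    have hmaj : Summable (fun t : ℕ => ε / 8 * (((t : ℝ) + 1) * β ^ (t + 1)) + K * β ^ (t + 1)) :=
      ((summable_lin_succ hβ0 hβ1).mul_left _).add ((summable_geom_succ hβ0 hβ1).mul_left K)
    have habs : Summable (fun t : ℕ => |β ^ (t + 1) * G (t + 1)|) := sG.abs
    have hpt : ∀ t : ℕ, |β ^ (t + 1) * G (t + 1)|
        ≤ ε / 8 * (((t : ℝ) + 1) * β ^ (t + 1)) + K * β ^ (t + 1) := by
      intro t
      have hbb : |G (t + 1)| ≤ ε / 8 * ((t : ℝ) + 1) + K := by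
        have := hGb (t + 1); push_cast at this; linarith
      have h2 : (0 : ℝ) < β ^ (t + 1) := pow_pos hβ0 _
      calc |β ^ (t + 1) * G (t + 1)| = β ^ (t + 1) * |G (t + 1)| := by
            rw [abs_mul, abs_of_pos h2]
        _ ≤ β ^ (t + 1) * (ε / 8 * ((t : ℝ) + 1) + K) :=
            mul_le_mul_of_nonneg_left hbb h2.le
        _ = ε / 8 * (((t : ℝ) + 1) * β ^ (t + 1)) + K * β ^ (t + 1) := by ring
    calc |∑' t : ℕ, β ^ (t + 1) * G (t + 1)| ≤ ∑' t : ℕ, |β ^ (t + 1) * G (t + 1)| := by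
          have h1 : Summable (fun t : ℕ => ‖β ^ (t + 1) * G (t + 1)‖) := by
            simpa only [Real.norm_eq_abs] using habs
          have h2 := norm_tsum_le_tsum_norm h1
          simpa only [Real.norm_eq_abs] using h2
      _ ≤ ∑' t : ℕ, (ε / 8 * (((t : ℝ) + 1) * β ^ (t + 1)) + K * β ^ (t + 1)) :=
          Summable.tsum_le_tsum hpt habs hmaj
      _ = ε / 8 * (β / (1 - β) ^ 2) + K * (β * (1 - β)⁻¹) := by
          rw [((summable_lin_succ hβ0 hβ1).mul_left _).tsum_add
            ((summable_geom_succ hβ0 hβ1).mul_left K), tsum_mul_left, tsum_mul_left,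
            tsum_lin_succ hβ0 hβ1, tsum_geom_succ hβ0 hβ1]
  rw [Real.dist_eq, key β hβ0 hβ1]
  have hne : (1 : ℝ) - β ≠ 0 := ne_of_gt hβpos
  have hb2 : (1 - β) ^ 2 * (ε / 8 * (β / (1 - β) ^ 2) + K * (β * (1 - β)⁻¹))
      = ε / 8 * β + K * (β * (1 - β)) := by
    field_simp
  have htri : |c * β + (1 - β) ^ 2 * (∑' t : ℕ, β ^ (t + 1) * G (t + 1)) - c|
      ≤ |c| * (1 - β) + (1 - β) ^ 2 * |∑' t : ℕ, β ^ (t + 1) * G (t + 1)| := by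
    have h1 : c * β + (1 - β) ^ 2 * (∑' t : ℕ, β ^ (t + 1) * G (t + 1)) - c
        = (-c) * (1 - β) + (1 - β) ^ 2 * (∑' t : ℕ, β ^ (t + 1) * G (t + 1)) := by ring
    rw [h1]
    refine (abs_add_le _ _).trans ?_
    rw [abs_mul, abs_neg, abs_of_pos hβpos, abs_mul, abs_of_pos (by positivity : (0:ℝ) < (1 - β) ^ 2)]
  have hres : (1 - β) ^ 2 * |∑' t : ℕ, β ^ (t + 1) * G (t + 1)| ≤ ε / 8 * β + K * (β * (1 - β)) := by
    calc (1 - β) ^ 2 * |∑' t : ℕ, β ^ (t + 1) * G (t + 1)|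
        ≤ (1 - β) ^ 2 * (ε / 8 * (β / (1 - β) ^ 2) + K * (β * (1 - β)⁻¹)) :=
          mul_le_mul_of_nonneg_left hRb (by positivity)
      _ = ε / 8 * β + K * (β * (1 - β)) := hb2
  have hfinal1 : |c| * (1 - β) + K * (β * (1 - β)) ≤ (|c| + K + 1) * (1 - β) := by
    nlinarith [hK0, hβ0.le, hβ1.le, hβpos.le]
  have hfinal2 : (|c| + K + 1) * (1 - β) < ε / 8 := by
    have := mul_lt_mul_of_pos_left hβd2 hden
    calc (|c| + K + 1) * (1 - β) < (|c| + K + 1) * (ε / (8 * (|c| + K + 1))) := this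
      _ = ε / 8 := by field_simp
  have hεβ : ε / 8 * β ≤ ε / 8 := by nlinarith
  calc |c * β + (1 - β) ^ 2 * (∑' t : ℕ, β ^ (t + 1) * G (t + 1)) - c|
      ≤ |c| * (1 - β) + (1 - β) ^ 2 * |∑' t : ℕ, β ^ (t + 1) * G (t + 1)| := htri
    _ ≤ |c| * (1 - β) + (ε / 8 * β + K * (β * (1 - β))) := by linarith
    _ < ε := by linarith

end Stmt11Aux


namespace Stmt11Aux

open Filter Finset Topology Set

lemma discSum_split {d e : ℕ → ℝ} {a Ce : ℝ} (hd : ∀ t, d t = e t + a)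
    (hCe : ∀ t, |e t| ≤ Ce) {β : ℝ} (hβ0 : 0 < β) (hβ1 : β < 1) :
    discSum d β = discSum e β + a * (β * (1 - β)⁻¹) := by
  have hgeom := summable_geom_succ hβ0 hβ1
  have hse : Summable (fun t : ℕ => β ^ (t + 1) * e t) := by
    refine Summable.of_norm_bounded (hgeom.mul_left Ce) fun t => ?_
    rw [Real.norm_eq_abs, abs_mul, abs_of_pos (pow_pos hβ0 _)]
    calc β ^ (t + 1) * |e t| ≤ β ^ (t + 1) * Ce :=
          mul_le_mul_of_nonneg_left (hCe t) (pow_pos hβ0 _).le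
      _ = Ce * β ^ (t + 1) := mul_comm _ _
  have hsa : Summable (fun t : ℕ => β ^ (t + 1) * a) := hgeom.mul_right a
  unfold discSum
  calc ∑' t : ℕ, β ^ (t + 1) * d t = ∑' t : ℕ, (β ^ (t + 1) * e t + β ^ (t + 1) * a) :=
        tsum_congr fun t => by rw [hd t]; ring
    _ = (∑' t : ℕ, β ^ (t + 1) * e t) + ∑' t : ℕ, β ^ (t + 1) * a := hse.tsum_add hsa
    _ = (∑' t : ℕ, β ^ (t + 1) * e t) + a * (β * (1 - β)⁻¹) := by
        rw [tsum_mul_right, tsum_geom_succ hβ0 hβ1, mul_comm]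

lemma liminf_junk_top {α : Type*} {l : Filter α} {f : α → ℝ} (h : Tendsto f l atTop) :
    Filter.liminf f l = 0 := by
  rw [Filter.liminf_eq]
  have hset : {a : ℝ | ∀ᶠ x in l, a ≤ f x} = Set.univ :=
    Set.eq_univ_of_forall fun a => h.eventually_ge_atTop a
  rw [hset]
  exact Real.sSup_univ

lemma liminf_junk_bot {α : Type*} {l : Filter α} [l.NeBot] {f : α → ℝ} (h : Tendsto f l atBot) :
    Filter.liminf f l = 0 := by
  rw [Filter.liminf_eq]
  have hset : {a : ℝ | ∀ᶠ x in l, a ≤ f x} = ∅ := by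
    ext a
    simp only [Set.mem_setOf_eq, Set.mem_empty_iff_false, iff_false]
    intro ha
    obtain ⟨x, h1, h2⟩ := (ha.and (h.eventually_le_atBot (a - 1))).exists
    linarith
  rw [hset]
  exact Real.sSup_empty

lemma EvPeriodicFrom_mono {w : ℕ → ℝ} {p T T' : ℕ} (h : EvPeriodicFrom w p T) (hT : T ≤ T') :
    EvPeriodicFrom w p T' :=
  ⟨h.1, fun t ht => h.2 t (hT.trans ht)⟩

lemma EvPeriodicFrom_mul {w : ℕ → ℝ} {p T : ℕ} (h : EvPeriodicFrom w p T) :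
    ∀ k, 1 ≤ k → EvPeriodicFrom w (p * k) T := by
  intro k hk
  induction k, hk using Nat.le_induction with
  | base => simpa using h
  | succ k hk ih =>
    refine ⟨?_, fun t ht => ?_⟩
    · have h1 := ih.1
      rw [Nat.mul_succ]
      omega
    · rw [Nat.mul_succ, ← Nat.add_assoc]
      rw [h.2 (t + p * k) (le_trans ht (Nat.le_add_right _ _)), ih.2 t ht]

lemma tendsto_top_of_pos {d e : ℕ → ℝ} {a c Ce CE : ℝ} (ha : 0 < a)
    (hd : ∀ t, d t = e t + a) (hCe : ∀ t, |e t| ≤ Ce)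
    (hE : ∀ n, |psum e n| ≤ CE) (hce : Tendsto (cesaroAvg e) atTop (𝓝 c)) :
    Tendsto (fun β => discSum d β) (𝓝[<] (1 : ℝ)) atTop ∧ Tendsto (cesaroAvg d) atTop atTop := by
  have hfe := frobenius hE hce
  constructor
  · have hsub : Tendsto (fun β : ℝ => 1 - β) (𝓝[<] (1 : ℝ)) (𝓝[>] (0 : ℝ)) := by
      rw [tendsto_nhdsWithin_iff]
      constructor
      · have h1 : Tendsto (fun β : ℝ => 1 - β) (𝓝 (1 : ℝ)) (𝓝 (1 - 1)) :=
          tendsto_const_nhds.sub tendsto_id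
        simpa using h1.mono_left nhdsWithin_le_nhds
      · filter_upwards [self_mem_nhdsWithin] with β (hβ : β < 1)
        exact Set.mem_Ioi.mpr (by linarith)
    have hinv : Tendsto (fun β : ℝ => (1 - β)⁻¹) (𝓝[<] (1 : ℝ)) atTop :=
      tendsto_inv_nhdsGT_zero.comp hsub
    have hid : Tendsto (fun β : ℝ => β) (𝓝[<] (1 : ℝ)) (𝓝 1) :=
      tendsto_id.mono_left nhdsWithin_le_nhds
    have hmul : Tendsto (fun β : ℝ => β * (1 - β)⁻¹) (𝓝[<] (1 : ℝ)) atTop :=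
      Tendsto.pos_mul_atTop one_pos hid hinv
    have hco : Tendsto (fun β : ℝ => a * (β * (1 - β)⁻¹)) (𝓝[<] (1 : ℝ)) atTop :=
      hmul.const_mul_atTop ha
    have hsum : Tendsto (fun β : ℝ => discSum e β + a * (β * (1 - β)⁻¹)) (𝓝[<] (1 : ℝ)) atTop :=
      tendsto_atTop_add_left_of_le' _ (c - 1)
        (hfe.eventually (eventually_ge_nhds (by linarith))) hco
    refine hsum.congr' ?_
    filter_upwards [Ioo_mem_nhdsLT (show (0 : ℝ) < 1 by norm_num)] with β hβ
    exact (discSum_split hd hCe hβ.1 hβ.2).symm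
  · have hconst : Tendsto (fun n : ℕ => a * ((n : ℝ) + 1) / 2) atTop atTop := by
      have h1 : Tendsto (fun n : ℕ => (n : ℝ) + 1) atTop atTop :=
        tendsto_atTop_add_const_right _ 1 tendsto_natCast_atTop_atTop
      have h2 := h1.const_mul_atTop (show (0 : ℝ) < a / 2 by linarith)
      refine h2.congr fun n => by ring
    have hsum : Tendsto (fun n : ℕ => cesaroAvg e n + a * ((n : ℝ) + 1) / 2) atTop atTop :=
      tendsto_atTop_add_left_of_le' _ (c - 1)
        (hce.eventually (eventually_ge_nhds (by linarith))) hconst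
    refine hsum.congr' ?_
    filter_upwards [eventually_ge_atTop 1] with n hn
    rw [← cesaroAvg_const a n hn, ← cesaroAvg_add]
    exact cesaroAvg_congr (fun t => (hd t).symm) n

end Stmt11Aux


/-- the Blackwell relation and Veinott's relation coincide on 𝒰₊. -/
theorem stmt_11 (u v : ℕ → ℝ) (hu : UPlus u) (hv : UPlus v) :
    (0 ≤ Filter.liminf (fun β => discSum (u - v) β) (nhdsWithin 1 (Set.Iio 1))) ↔
      0 ≤ Filter.liminf (cesaroAvg (u - v)) Filter.atTop := by
  classical
  open Stmt11Aux in
  obtain ⟨⟨Cu, hCu⟩, wu, Δu, hueq, ⟨pu, Tu, hpu⟩, ⟨Lu, hLu⟩, ⟨Bu, hBu⟩⟩ := hu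
  obtain ⟨⟨Cv, hCv⟩, wv, Δv, hveq, ⟨pv, Tv, hpv⟩, ⟨Lv, hLv⟩, ⟨Bv, hBv⟩⟩ := hv
  set d : ℕ → ℝ := u - v with hdd
  set w : ℕ → ℝ := fun t => wu t - wv t with hwdef
  set Δ : ℕ → ℝ := fun t => Δu t - Δv t with hΔdef
  have hd_t : ∀ t, d t = w t + Δ t := by
    intro t
    have h1 : u t = wu t + Δu t := by rw [hueq]; rfl
    have h2 : v t = wv t + Δv t := by rw [hveq]; rfl
    simp only [hdd, Pi.sub_apply, h1, h2, hwdef, hΔdef]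
    ring
  set p : ℕ := pu * pv with hpdef
  set T : ℕ := max Tu Tv with hTdef
  have hwu : EvPeriodicFrom wu p T :=
    Stmt11Aux.EvPeriodicFrom_mono (Stmt11Aux.EvPeriodicFrom_mul hpu pv hpv.1) (le_max_left _ _)
  have hwv : EvPeriodicFrom wv p T := by
    have h := Stmt11Aux.EvPeriodicFrom_mul hpv pu hpu.1
    rw [Nat.mul_comm] at h
    exact Stmt11Aux.EvPeriodicFrom_mono h (le_max_right _ _)
  have hw : EvPeriodicFrom w p T :=
    ⟨hwu.1, fun t ht => by simp only [hwdef]; rw [hwu.2 t ht, hwv.2 t ht]⟩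
  have hp1 : 1 ≤ p := hw.1
  have hp0 : (p : ℝ) ≠ 0 := Nat.cast_ne_zero.mpr (by omega)
  obtain ⟨C1, hC1⟩ := Stmt11Aux.psum_dev_bdd hw
  set a : ℝ := (∑ i ∈ Finset.range p, w (T + i)) / p with hadef
  set e : ℕ → ℝ := fun t => d t - a with hedef
  have hd_e : ∀ t, d t = e t + a := fun t => by simp only [hedef]; ring
  have hd_bdd : ∀ t, |d t| ≤ Cu + Cv := by
    intro t
    simp only [hdd, Pi.sub_apply]
    have h1 : |u t - v t| ≤ |u t| + |v t| := by
      rw [sub_eq_add_neg]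
      refine (abs_add_le _ _).trans ?_
      rw [abs_neg]
    exact h1.trans (add_le_add (hCu t) (hCv t))
  have he_bdd : ∀ t, |e t| ≤ (Cu + Cv) + |a| := by
    intro t
    simp only [hedef]
    have h1 : |d t - a| ≤ |d t| + |a| := by
      rw [sub_eq_add_neg]
      refine (abs_add_le _ _).trans ?_
      rw [abs_neg]
    exact h1.trans (add_le_add (hd_bdd t) le_rfl)
  -- bounded partial sums of e
  have hE : ∀ n, |psum e n| ≤ C1 + (Bu + Bv) := by
    intro n
    have hdn : psum d n = psum w n + psum Δ n := by
      rw [Stmt11Aux.psum_congr hd_t n, Stmt11Aux.psum_add]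
    have h1 : psum e n = (psum w n - n * a) + psum Δ n := by
      have h2 : psum e n = psum d n - n * a := Stmt11Aux.psum_sub_const d a n
      rw [h2, hdn]; ring
    have hΔn : |psum Δ n| ≤ Bu + Bv := by
      have h3 : psum Δ n = psum Δu n - psum Δv n := by
        rw [hΔdef]; exact Stmt11Aux.psum_sub Δu Δv n
      rw [h3, sub_eq_add_neg]
      refine ((abs_add_le _ _).trans ?_)
      rw [abs_neg]
      exact add_le_add (hBu n) (hBv n)
    rw [h1]
    exact (abs_add_le _ _).trans (add_le_add (hC1 n) hΔn)
  -- Cesàro convergence of e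
  set w' : ℕ → ℝ := fun t => w t - a with hw'def
  have hpa : (p : ℝ) * a = ∑ i ∈ Finset.range p, w (T + i) := by
    rw [hadef]; field_simp
  have hq_per : ∀ n, T ≤ n → psum w' (n + p) = psum w' n := by
    intro n hn
    rw [Stmt11Aux.psum_add_block]
    have h2 : ∑ i ∈ Finset.range p, w' (n + i)
        = ∑ i ∈ Finset.range p, w (n + i) - (p : ℝ) * a := by
      simp only [hw'def]
      rw [Finset.sum_sub_distrib, Finset.sum_const, Finset.card_range, nsmul_eq_mul]
    rw [h2, Stmt11Aux.window_const hw.2 n hn, ← hpa]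
    ring
  set q : ℕ → ℝ := fun k => psum w' (k + 1) with hqdef
  have hq : EvPeriodicFrom q p T := by
    refine ⟨hp1, fun k hk => ?_⟩
    simp only [hqdef]
    rw [show k + p + 1 = (k + 1) + p by omega]
    exact hq_per (k + 1) (by omega)
  obtain ⟨C2, hC2⟩ := Stmt11Aux.psum_dev_bdd hq
  set m : ℝ := (∑ i ∈ Finset.range p, q (T + i)) / p with hmdef
  have hw'avg : Tendsto (cesaroAvg w') atTop (𝓝 m) := by
    have h := Stmt11Aux.avg_of_dev_bdd hC2
    exact h.congr fun n => rfl
  have hΔavg : Tendsto (cesaroAvg Δ) atTop (𝓝 (Lu - Lv)) := by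
    refine (hLu.sub hLv).congr fun n => ?_
    rw [hΔdef]
    exact (Stmt11Aux.cesaroAvg_sub Δu Δv n).symm
  set c : ℝ := m + (Lu - Lv) with hcdef
  have hce : Tendsto (cesaroAvg e) atTop (𝓝 c) := by
    refine (hw'avg.add hΔavg).congr fun n => ?_
    rw [← Stmt11Aux.cesaroAvg_add]
    exact Stmt11Aux.cesaroAvg_congr (fun t => by simp only [hw'def, hedef]; rw [hd_t t]; ring) n
  -- trichotomy on the long-run average a
  rcases lt_trichotomy a 0 with ha | ha | ha
  · -- a < 0 : both tend to -∞, both liminfs are 0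
    have hneg := Stmt11Aux.tendsto_top_of_pos (d := fun t => -d t) (e := fun t => -e t)
      (a := -a) (c := -c) (Ce := (Cu + Cv) + |a|) (CE := C1 + (Bu + Bv))
      (by linarith)
      (fun t => by show -d t = -e t + -a; rw [hd_e t]; ring)
      (fun t => by show |-e t| ≤ _; rw [abs_neg]; exact he_bdd t)
      (fun n => by
        show |psum (fun t => -e t) n| ≤ _
        rw [Stmt11Aux.psum_neg, abs_neg]; exact hE n)
      (by
        refine hce.neg.congr fun n => ?_
        exact (Stmt11Aux.cesaroAvg_neg e n).symm)
    obtain ⟨hdisc, hces⟩ := hneg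
    have hdisc' : Tendsto (fun β => discSum d β) (𝓝[<] (1 : ℝ)) atBot := by
      rw [← tendsto_neg_atTop_iff]
      refine hdisc.congr fun β => ?_
      unfold discSum
      rw [← tsum_neg]
      exact tsum_congr fun t => by ring
    have hces' : Tendsto (cesaroAvg d) atTop atBot := by
      rw [← tendsto_neg_atTop_iff]
      refine hces.congr fun n => ?_
      exact Stmt11Aux.cesaroAvg_neg d n
    rw [Stmt11Aux.liminf_junk_bot hdisc', Stmt11Aux.liminf_junk_bot hces']
  · -- a = 0 : both converge to c
    have heq : e = d := funext fun t => by simp [hedef, ha]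
    rw [heq] at hE hce
    have hdisc := Stmt11Aux.frobenius hE hce
    rw [hdisc.liminf_eq, hce.liminf_eq]
  · -- a > 0 : both tend to +∞, both liminfs are 0
    obtain ⟨hdisc, hces⟩ := Stmt11Aux.tendsto_top_of_pos ha hd_e he_bdd hE hce
    rw [Stmt11Aux.liminf_junk_top hdisc, Stmt11Aux.liminf_junk_top hces]
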